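/- Under the cohomology ladder setup, for every integer k the Λ-linear map φ : BX^k ⊕ CY^k → CX^k ⊕ BY^k defined by φ(x, w) = (j^k x + g^k w, −θ^k x) is an isomorphism of Λ-modules. (Proposition 4.1 of the paper, abstracting the cross isomorphism H^k(X) ⊕ H^k(W) ≅ H^k(W̃) ⊕ H^k(Y).) -/

import Mathlib

open Function

/-- Proposition 4.1: under the cohomology ladder setup, the map
`φ(x, w) = (j x + g w, -θ x)` is an isomorphism `BX^k ⊕ CY^k ≅ CX^k ⊕ BY^k`. -/
theorem cohomology_cross_isomorphism
    (Λ : Type*) [CommRing Λ]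
    (R BX BY CX CY : ℤ → Type*)
    [∀ k, AddCommGroup (R k)] [∀ k, Module Λ (R k)]
    [∀ k, AddCommGroup (BX k)] [∀ k, Module Λ (BX k)]
    [∀ k, AddCommGroup (BY k)] [∀ k, Module Λ (BY k)]
    [∀ k, AddCommGroup (CX k)] [∀ k, Module Λ (CX k)]
    [∀ k, AddCommGroup (CY k)] [∀ k, Module Λ (CY k)]
    (rX : ∀ k, R k →ₗ[Λ] BX k) (j : ∀ k, BX k →ₗ[Λ] CX k) (dX : ∀ k, CX k →ₗ[Λ] R (k+1))
    (rY : ∀ k, R k →ₗ[Λ] BY k) (i : ∀ k, BY k →ₗ[Λ] CY k) (dY : ∀ k, CY k →ₗ[Λ] R (k+1))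
    (hXex₁ : ∀ k, Function.Exact (rX k) (j k))
    (hXex₂ : ∀ k, Function.Exact (j k) (dX k))
    (hXex₃ : ∀ k, Function.Exact (dX k) (rX (k+1)))
    (hYex₁ : ∀ k, Function.Exact (rY k) (i k))
    (hYex₂ : ∀ k, Function.Exact (i k) (dY k))
    (hYex₃ : ∀ k, Function.Exact (dY k) (rY (k+1)))
    (f : ∀ k, BY k →ₗ[Λ] BX k) (g : ∀ k, CY k →ₗ[Λ] CX k)
    (hfr : ∀ k, (f k).comp (rY k) = rX k)
    (hjf : ∀ k, (j k).comp (f k) = (g k).comp (i k))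
    (hdg : ∀ k, (dX k).comp (g k) = dY k)
    (θ : ∀ k, BX k →ₗ[Λ] BY k) (η : ∀ k, CX k →ₗ[Λ] CY k)
    (hθr : ∀ k, (θ k).comp (rX k) = rY k)
    (hiθ : ∀ k, (i k).comp (θ k) = (η k).comp (j k))
    (hdη : ∀ k, (dY k).comp (η k) = dX k)
    (hθf : ∀ k, (θ k).comp (f k) = LinearMap.id)
    (hηg : ∀ k, (η k).comp (g k) = LinearMap.id)
    (k : ℤ) :
    Function.Bijective
      ⇑(LinearMap.prod (LinearMap.coprod (j k) (g k))
        ((-(θ k)).comp (LinearMap.fst Λ (BX k) (CY k)))) := by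
  obtain ⟨k, rfl⟩ : ∃ k', k = k' + 1 := ⟨k - 1, by ring⟩
  constructor
  · rw [injective_iff_map_eq_zero]
    rintro ⟨x, w⟩ h
    rw [Prod.ext_iff] at h
    simp only [LinearMap.prod_apply, LinearMap.coprod_apply, LinearMap.comp_apply,
      LinearMap.fst_apply, LinearMap.neg_apply, Function.prod_apply, Prod.fst_zero, Prod.snd_zero,
      neg_eq_zero] at h
    obtain ⟨h1, h2⟩ := h
    -- apply η to h1
    have hw : w = 0 := by
      have := congrArg (η (k+1)) h1
      rw [map_add, map_zero] at this
      have e1 : η (k+1) (j (k+1) x) = i (k+1) (θ (k+1) x) :=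
        (LinearMap.congr_fun (hiθ (k+1)) x).symm
      have e2 : η (k+1) (g (k+1) w) = w := LinearMap.congr_fun (hηg (k+1)) w
      rw [e1, e2, h2, map_zero, zero_add] at this
      exact this
    have hjx : j (k+1) x = 0 := by rw [hw, map_zero, add_zero] at h1; exact h1
    obtain ⟨r, hr⟩ := (hXex₁ (k+1) x).mp hjx
    have hrY : rY (k+1) r = 0 := by
      have : θ (k+1) (rX (k+1) r) = rY (k+1) r := LinearMap.congr_fun (hθr (k+1)) r
      rw [← this, hr, h2]
    obtain ⟨c, hc⟩ := (hYex₃ k r).mp hrY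
    have hx0 : x = 0 := by
      have hdgc : dX k (g k c) = dY k c := LinearMap.congr_fun (hdg k) c
      have := (hXex₃ k).apply_apply_eq_zero (g k c)
      rw [hdgc, hc] at this
      rw [← hr, this]
    simp [hx0, hw]
  · rintro ⟨c, b⟩
    set u := c + j (k+1) (f (k+1) b) with hu
    set v := u - g (k+1) (η (k+1) u) with hv
    have hηv : η (k+1) v = 0 := by
      have e : η (k+1) (g (k+1) (η (k+1) u)) = η (k+1) u :=
        LinearMap.congr_fun (hηg (k+1)) (η (k+1) u)
      rw [hv, map_sub, e, sub_self]
    have hdXv : dX (k+1) v = 0 := by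
      have : dY (k+1) (η (k+1) v) = dX (k+1) v := LinearMap.congr_fun (hdη (k+1)) v
      rw [← this, hηv, map_zero]
    obtain ⟨x, hx⟩ := (hXex₂ (k+1) v).mp hdXv
    have hiθx : i (k+1) (θ (k+1) x) = 0 := by
      have e : i (k+1) (θ (k+1) x) = η (k+1) (j (k+1) x) :=
        LinearMap.congr_fun (hiθ (k+1)) x
      rw [e, hx, hηv]
    obtain ⟨r, hr⟩ := (hYex₁ (k+1) (θ (k+1) x)).mp hiθx
    refine ⟨(-(f (k+1) b) + (x - rX (k+1) r), η (k+1) u), ?_⟩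
    have hθx1 : θ (k+1) (x - rX (k+1) r) = 0 := by
      have e : θ (k+1) (rX (k+1) r) = rY (k+1) r := LinearMap.congr_fun (hθr (k+1)) r
      rw [map_sub, e, hr, sub_self]
    have hjx1 : j (k+1) (x - rX (k+1) r) = v := by
      rw [map_sub, (hXex₁ (k+1)).apply_apply_eq_zero r, sub_zero, hx]
    have hθfb : θ (k+1) (f (k+1) b) = b := LinearMap.congr_fun (hθf (k+1)) b
    simp only [LinearMap.prod_apply, LinearMap.coprod_apply, LinearMap.comp_apply,
      LinearMap.fst_apply, LinearMap.neg_apply, Function.prod_apply, Prod.mk.injEq]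
    constructor
    · rw [map_add, map_neg, hjx1, hv, hu]
      abel
    · rw [map_add, map_neg, hθx1, hθfb, add_zero, neg_neg]
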